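/- If P and Q are lattice polytopes in ℝ² whose Minkowski sum P + Q is contained in a triangle Δ and contains an edge E of Δ whose only lattice points are its two endpoints, then P or Q is a single point. -/

import Mathlib

open Pointwise

noncomputable section

/-- Laurent polynomials in two variables over `K`. -/
abbrev LP (K : Type*) [Field K] := AddMonoidAlgebra K (ℤ × ℤ)

/-- Embedding of lattice points into the real plane. -/
def toR : ℤ × ℤ → ℝ × ℝ := fun p => ((p.1 : ℝ), (p.2 : ℝ))

/-- The Newton polytope of a Laurent polynomial: convex hull of its exponent vectors. -/
def newtonPolytope {K : Type*} [Field K] (f : LP K) : Set (ℝ × ℝ) :=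
  convexHull ℝ (toR '' (f.coeff.support : Set (ℤ × ℤ)))

lemma toR_inj : Function.Injective toR := by
  intro p q h
  simp only [toR, Prod.ext_iff] at h ⊢
  exact ⟨by exact_mod_cast h.1, by exact_mod_cast h.2⟩

lemma toR_add (p q : ℤ × ℤ) : toR (p + q) = toR p + toR q := by
  simp [toR, Prod.ext_iff]

/-- The affine basis coming from an affinely independent triple in the plane. -/
def triBasis {A B c : ℝ × ℝ} (htri : AffineIndependent ℝ ![A, B, c]) :
    AffineBasis (Fin 3) ℝ (ℝ × ℝ) :=
  ⟨![A, B, c], htri, by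
    rw [htri.affineSpan_eq_top_iff_card_eq_finrank_add_one]; simp⟩

lemma triBasis_range {A B c : ℝ × ℝ} (htri : AffineIndependent ℝ ![A, B, c]) :
    Set.range (triBasis htri) = {A, B, c} := by
  show Set.range ![A, B, c] = {A, B, c}
  simp [Matrix.range_cons, Matrix.range_empty]
  ext x; simp; tauto

lemma triBasis_hull {A B c : ℝ × ℝ} (htri : AffineIndependent ℝ ![A, B, c]) :
    convexHull ℝ {A, B, c} = {x | ∀ i, 0 ≤ (triBasis htri).coord i x} := by
  rw [← triBasis_range htri, (triBasis htri).convexHull_eq_nonneg_coord]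

lemma triBasis_apply0 {A B c : ℝ × ℝ} (htri : AffineIndependent ℝ ![A, B, c]) :
    triBasis htri 0 = A := rfl

/-- A triangle contains no nontrivial translate of one of its edges. -/
lemma translate_aux {A B c : ℝ × ℝ} (htri : AffineIndependent ℝ ![A, B, c]) {v : ℝ × ℝ}
    (h1 : A + v ∈ convexHull ℝ {A, B, c}) (h2 : B + v ∈ convexHull ℝ {A, B, c}) :
    v = 0 := by
  set bb := triBasis htri with hbb
  rw [triBasis_hull htri] at h1 h2
  have hAB : ∀ i : Fin 3, bb.coord i (B + v) - bb.coord i (A + v)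
      = bb.coord i B - bb.coord i A := by
    intro i
    have e1 : (bb.coord i).linear ((B + v) - (A + v)) = bb.coord i (B+v) - bb.coord i (A+v) :=
      (bb.coord i).linearMap_vsub _ _
    have e2 : (bb.coord i).linear (B - A) = bb.coord i B - bb.coord i A :=
      (bb.coord i).linearMap_vsub _ _
    rw [← e1, ← e2]; ring_nf
  have c0A : bb.coord 0 A = 1 := bb.coord_apply_eq 0
  have c1A : bb.coord 1 A = 0 := bb.coord_apply_ne (i := 1) (j := 0) (by decide)
  have c2A : bb.coord 2 A = 0 := bb.coord_apply_ne (i := 2) (j := 0) (by decide)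
  have c0B : bb.coord 0 B = 0 := bb.coord_apply_ne (i := 0) (j := 1) (by decide)
  have hsum := bb.sum_coord_apply_eq_one (A + v)
  rw [Fin.sum_univ_three] at hsum
  have h10 := h1 0; have h11 := h1 1; have h12 := h1 2
  have h20 := h2 0
  have key0 := hAB 0
  rw [c0A, c0B] at key0
  have hw0 : bb.coord 0 (A + v) = 1 := by linarith
  have hw1 : bb.coord 1 (A + v) = 0 := by linarith
  have hw2 : bb.coord 2 (A + v) = 0 := by linarith
  have hAv : A + v = A := by
    apply bb.ext_elem
    intro i
    fin_cases i
    · show bb.coord 0 (A + v) = bb.coord 0 A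
      rw [hw0, c0A]
    · show bb.coord 1 (A + v) = bb.coord 1 A
      rw [hw1, c1A]
    · show bb.coord 2 (A + v) = bb.coord 2 A
      rw [hw2, c2A]
  exact add_eq_left.mp hAv

lemma segment_aux {A B c : ℝ × ℝ} (htri : AffineIndependent ℝ ![A, B, c]) {x : ℝ × ℝ}
    (hx : x ∈ convexHull ℝ {A, B, c}) (h2 : (triBasis htri).coord 2 x = 0) :
    x ∈ segment ℝ A B := by
  set bb := triBasis htri with hbb
  rw [triBasis_hull htri] at hx
  have hsum := bb.sum_coord_apply_eq_one x
  rw [Fin.sum_univ_three] at hsum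
  have hcomb := bb.linear_combination_coord_eq_self x
  rw [Fin.sum_univ_three] at hcomb
  have hb0 : bb 0 = A := rfl
  have hb1 : bb 1 = B := rfl
  refine ⟨bb.coord 0 x, bb.coord 1 x, hx 0, hx 1, by rw [h2] at hsum; linarith, ?_⟩
  rw [h2, hb0, hb1] at hcomb
  simpa using hcomb

set_option maxHeartbeats 1000000 in
lemma oneSide (S T : Finset (ℤ × ℤ)) (hT : T.Nonempty)
    (a b : ℤ × ℤ) (c : ℝ × ℝ)
    (htri : AffineIndependent ℝ ![toR a, toR b, c])
    (hsub : convexHull ℝ (toR '' (S : Set (ℤ × ℤ))) + convexHull ℝ (toR '' (T : Set (ℤ × ℤ)))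
              ⊆ convexHull ℝ {toR a, toR b, c})
    (hE : segment ℝ (toR a) (toR b)
              ⊆ convexHull ℝ (toR '' (S : Set (ℤ × ℤ))) + convexHull ℝ (toR '' (T : Set (ℤ × ℤ))))
    (ℓ : (ℝ × ℝ) →ᵃ[ℝ] ℝ)
    (hA : ℓ (toR a) = 0) (hB : ℓ (toR b) = 0)
    (hΔ : ∀ x ∈ convexHull ℝ {toR a, toR b, c}, 0 ≤ ℓ x)
    (p : ℤ × ℤ) (hp : p ∈ S)
    (hmin : ∀ s ∈ S, ℓ.linear (toR p) ≤ ℓ.linear (toR s))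
    (huniq : ∀ s ∈ S, ℓ.linear (toR s) = ℓ.linear (toR p) → s = p) :
    convexHull ℝ (toR '' (S : Set (ℤ × ℤ))) = {toR p} := by
  set L := ℓ.linear with hL
  set m := L (toR p) with hm
  set n := T.inf' hT (fun t => L (toR t)) with hn
  have hdec : ∀ x : ℝ × ℝ, ℓ x = L x + ℓ 0 := by
    intro x
    have := ℓ.map_vadd 0 x
    simpa [vadd_eq_add] using this
  set P := convexHull ℝ (toR '' (S : Set (ℤ × ℤ))) with hP
  set Q := convexHull ℝ (toR '' (T : Set (ℤ × ℤ))) with hQ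
  have hPle : ∀ x ∈ P, m ≤ L x := by
    intro x hx
    have hconv : Convex ℝ (L ⁻¹' Set.Ici m) := (convex_Ici m).linear_preimage L
    have : P ⊆ L ⁻¹' Set.Ici m := by
      apply convexHull_min _ hconv
      rintro _ ⟨s, hs, rfl⟩
      exact hmin s hs
    exact this hx
  have hQle : ∀ y ∈ Q, n ≤ L y := by
    intro y hy
    have hconv : Convex ℝ (L ⁻¹' Set.Ici n) := (convex_Ici n).linear_preimage L
    have : Q ⊆ L ⁻¹' Set.Ici n := by
      apply convexHull_min _ hconv
      rintro _ ⟨t, ht, rfl⟩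
      exact Finset.inf'_le (fun t => L (toR t)) ht
    exact this hy
  obtain ⟨t₀, ht₀, ht₀n⟩ := T.exists_mem_eq_inf' hT (fun t => L (toR t))
  have hmem0 : toR p + toR t₀ ∈ P + Q :=
    Set.add_mem_add (subset_convexHull ℝ _ ⟨p, hp, rfl⟩) (subset_convexHull ℝ _ ⟨t₀, ht₀, rfl⟩)
  have hge : 0 ≤ m + n + ℓ 0 := by
    have := hΔ _ (hsub hmem0)
    rw [hdec, map_add] at this
    rw [hn, ht₀n]
    linarith
  -- decompose A and B
  have hdecomp : ∀ z ∈ segment ℝ (toR a) (toR b), ∀ hz : ℓ z = 0,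
      z - toR p ∈ Q := by
    intro z hz hz0
    obtain ⟨x, hx, y, hy, hxy⟩ := Set.mem_add.mp (hE hz)
    have h1 : m ≤ L x := hPle x hx
    have h2 : n ≤ L y := hQle y hy
    have h3 : L x + L y + ℓ 0 = 0 := by
      rw [← map_add, ← hdec, hxy, hz0]
    have hLx : L x = m := by linarith
    -- x = toR p via the convexity trick
    have hC : Convex ℝ {w : ℝ × ℝ | w = toR p ∨ m < L w} := by
      rintro w (rfl | hw) w' hw' u v hu hv huv
      · rcases hw' with rfl | hw'
        · left
          rw [← add_smul, huv, one_smul]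
        · rcases eq_or_lt_of_le hv with rfl | hv'
          · left; simp at huv; simp [huv]
          · right
            have : L (u • toR p + v • w') = u * m + v * L w' := by
              simp [map_add, map_smul, smul_eq_mul, hm]
            rw [this]
            have hmm : u * m + v * m = m := by rw [← add_mul, huv, one_mul]
            have h2' := mul_pos hv' (sub_pos.mpr hw')
            nlinarith [h2', hmm]
      · rcases hw' with rfl | hw'
        · rcases eq_or_lt_of_le hu with rfl | hu'
          · left; simp at huv; simp [huv]
          · right
            have : L (u • w + v • toR p) = u * L w + v * m := by
              simp [map_add, map_smul, smul_eq_mul, hm]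
            rw [this]
            have hmm : u * m + v * m = m := by rw [← add_mul, huv, one_mul]
            have h2' := mul_pos hu' (sub_pos.mpr hw)
            nlinarith [h2', hmm]
        · rcases eq_or_lt_of_le hu with rfl | hu'
          · right
            simp at huv
            simpa [huv] using hw'
          · right
            have : L (u • w + v • w') = u * L w + v * L w' := by
              simp [map_add, map_smul, smul_eq_mul]
            rw [this]
            have hmm : u * m + v * m = m := by rw [← add_mul, huv, one_mul]
            nlinarith [mul_pos hu' (sub_pos.mpr hw), mul_nonneg hv (sub_pos.mpr hw').le, hmm]
    have hsubC : P ⊆ {w : ℝ × ℝ | w = toR p ∨ m < L w} := by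
      apply convexHull_min _ hC
      rintro _ ⟨s, hs, rfl⟩
      rcases eq_or_lt_of_le (hmin s hs) with h | h
      · left; exact congrArg toR (huniq s hs h.symm)
      · right; exact h
    have hxp : x = toR p := by
      rcases hsubC hx with h | h
      · exact h
      · rw [hLx] at h; exact absurd h (lt_irrefl m)
    have : y = z - toR p := by rw [← hxy, hxp]; ring
    rwa [this] at hy
  have hyA : toR a - toR p ∈ Q :=
    hdecomp _ (left_mem_segment ℝ _ _) hA
  have hyB : toR b - toR p ∈ Q :=
    hdecomp _ (right_mem_segment ℝ _ _) hB
  -- every point of S equals p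
  have hall : ∀ s ∈ S, s = p := by
    intro s hs
    have hsP : toR s ∈ P := subset_convexHull ℝ _ ⟨s, hs, rfl⟩
    have h1 : toR a + (toR s - toR p) ∈ convexHull ℝ {toR a, toR b, c} := by
      have : toR s + (toR a - toR p) ∈ P + Q := Set.add_mem_add hsP hyA
      have h' := hsub this
      have e : toR a + (toR s - toR p) = toR s + (toR a - toR p) := by ring
      rwa [e]
    have h2 : toR b + (toR s - toR p) ∈ convexHull ℝ {toR a, toR b, c} := by
      have : toR s + (toR b - toR p) ∈ P + Q := Set.add_mem_add hsP hyB
      have h' := hsub this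
      have e : toR b + (toR s - toR p) = toR s + (toR b - toR p) := by ring
      rwa [e]
    have := translate_aux htri h1 h2
    exact toR_inj (by rwa [sub_eq_zero] at this)
  have himg : toR '' (S : Set (ℤ × ℤ)) = {toR p} := by
    apply Set.eq_singleton_iff_nonempty_unique_mem.mpr
    constructor
    · exact ⟨toR p, ⟨p, hp, rfl⟩⟩
    · rintro _ ⟨s, hs, rfl⟩
      rw [hall s hs]
  rw [hP, himg, convexHull_singleton]

set_option maxHeartbeats 1000000 in
/-- If the Minkowski sum of two lattice polytopes lies in a triangle and contains an
edge of the triangle whose only lattice points are its two endpoints, then one of the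
two lattice polytopes is a single point. -/
theorem stmt1 (S T : Finset (ℤ × ℤ)) (hS : S.Nonempty) (hT : T.Nonempty)
    (a b : ℤ × ℤ) (c : ℝ × ℝ)
    (htri : AffineIndependent ℝ ![toR a, toR b, c])
    (hsub : convexHull ℝ (toR '' (S : Set (ℤ × ℤ))) + convexHull ℝ (toR '' (T : Set (ℤ × ℤ)))
              ⊆ convexHull ℝ {toR a, toR b, c})
    (hE : segment ℝ (toR a) (toR b)
              ⊆ convexHull ℝ (toR '' (S : Set (ℤ × ℤ))) + convexHull ℝ (toR '' (T : Set (ℤ × ℤ))))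
    (hedge : ∀ p : ℤ × ℤ, toR p ∈ segment ℝ (toR a) (toR b) → p = a ∨ p = b) :
    (∃ p : ℝ × ℝ, convexHull ℝ (toR '' (S : Set (ℤ × ℤ))) = {p}) ∨
    (∃ q : ℝ × ℝ, convexHull ℝ (toR '' (T : Set (ℤ × ℤ))) = {q}) := by
  set bb := triBasis htri with hbb
  set ℓ : (ℝ × ℝ) →ᵃ[ℝ] ℝ := bb.coord 2 with hℓ
  have hA : ℓ (toR a) = 0 := bb.coord_apply_ne (i := 2) (j := 0) (by decide)
  have hB : ℓ (toR b) = 0 := bb.coord_apply_ne (i := 2) (j := 1) (by decide)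
  have hΔ : ∀ x ∈ convexHull ℝ {toR a, toR b, c}, 0 ≤ ℓ x := by
    intro x hx
    rw [triBasis_hull htri] at hx
    exact hx 2
  set L := ℓ.linear with hL
  have hdec : ∀ x : ℝ × ℝ, ℓ x = L x + ℓ 0 := by
    intro x
    have := ℓ.map_vadd 0 x
    simpa [vadd_eq_add] using this
  obtain ⟨p, hp, hpm⟩ := S.exists_mem_eq_inf' hS (fun s => L (toR s))
  obtain ⟨q, hq, hqn⟩ := T.exists_mem_eq_inf' hT (fun t => L (toR t))
  set m := S.inf' hS (fun s => L (toR s)) with hm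
  set n := T.inf' hT (fun t => L (toR t)) with hn
  set P := convexHull ℝ (toR '' (S : Set (ℤ × ℤ))) with hPdef
  set Q := convexHull ℝ (toR '' (T : Set (ℤ × ℤ))) with hQdef
  have hPle : ∀ x ∈ P, m ≤ L x := by
    intro x hx
    have hconv : Convex ℝ (L ⁻¹' Set.Ici m) := (convex_Ici m).linear_preimage L
    have : P ⊆ L ⁻¹' Set.Ici m := by
      apply convexHull_min _ hconv
      rintro _ ⟨s, hs, rfl⟩
      exact Finset.inf'_le (fun s => L (toR s)) hs
    exact this hx
  have hQle : ∀ y ∈ Q, n ≤ L y := by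
    intro y hy
    have hconv : Convex ℝ (L ⁻¹' Set.Ici n) := (convex_Ici n).linear_preimage L
    have : Q ⊆ L ⁻¹' Set.Ici n := by
      apply convexHull_min _ hconv
      rintro _ ⟨t, ht, rfl⟩
      exact Finset.inf'_le (fun t => L (toR t)) ht
    exact this hy
  have hge : 0 ≤ m + n + ℓ 0 := by
    have hmem0 : toR p + toR q ∈ P + Q :=
      Set.add_mem_add (subset_convexHull ℝ _ ⟨p, hp, rfl⟩) (subset_convexHull ℝ _ ⟨q, hq, rfl⟩)
    have := hΔ _ (hsub hmem0)
    rw [hdec, map_add] at this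
    rw [hpm, hqn]
    linarith
  have hle : m + n + ℓ 0 ≤ 0 := by
    obtain ⟨x, hx, y, hy, hxy⟩ := Set.mem_add.mp (hE (left_mem_segment ℝ _ _))
    have h1 := hPle x hx
    have h2 := hQle y hy
    have h3 : L x + L y + ℓ 0 = 0 := by rw [← map_add, ← hdec, hxy, hA]
    linarith
  have hsum0 : m + n + ℓ 0 = 0 := le_antisymm hle hge
  -- face points sum to a or b
  have hface : ∀ s ∈ S, L (toR s) = m → ∀ t ∈ T, L (toR t) = n → s + t = a ∨ s + t = b := by
    intro s hs hsm t ht htn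
    have hmem : toR s + toR t ∈ convexHull ℝ {toR a, toR b, c} := by
      exact hsub (Set.add_mem_add (subset_convexHull ℝ _ ⟨s, hs, rfl⟩)
        (subset_convexHull ℝ _ ⟨t, ht, rfl⟩))
    have hz : ℓ (toR s + toR t) = 0 := by
      rw [hdec, map_add, hsm, htn]; linarith
    have hseg : toR (s + t) ∈ segment ℝ (toR a) (toR b) := by
      rw [toR_add]
      exact segment_aux htri hmem hz
    exact hedge _ hseg
  by_cases hSuniq : ∀ s ∈ S, L (toR s) = L (toR p) → s = p
  · left
    refine ⟨toR p, ?_⟩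
    exact oneSide S T hT a b c htri hsub hE ℓ hA hB hΔ p hp
      (fun s hs => hpm ▸ Finset.inf'_le (fun s => L (toR s)) hs) hSuniq
  · right
    push_neg at hSuniq
    obtain ⟨s', hs', hsm', hsne⟩ := hSuniq
    have hTuniq : ∀ t ∈ T, L (toR t) = L (toR q) → t = q := by
      intro t ht htn
      by_contra htne
      have e1 := hface p hp hpm.symm q hq hqn.symm
      have e2 := hface p hp hpm.symm t ht (by rw [htn, ← hqn])
      have e3 := hface s' hs' (by rw [hsm', ← hpm]) q hq hqn.symm
      have e4 := hface s' hs' (by rw [hsm', ← hpm]) t ht (by rw [htn, ← hqn])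
      simp only [ne_eq, Prod.ext_iff, Prod.fst_add, Prod.snd_add] at e1 e2 e3 e4 hsne htne
      rcases e1 with e1 | e1 <;> rcases e2 with e2 | e2 <;> rcases e3 with e3 | e3 <;>
        rcases e4 with e4 | e4 <;> omega
    have hsub' : Q + P ⊆ convexHull ℝ {toR a, toR b, c} := by
      rw [add_comm]; exact hsub
    have hE' : segment ℝ (toR a) (toR b) ⊆ Q + P := by
      rw [add_comm]; exact hE
    refine ⟨toR q, ?_⟩
    exact oneSide T S hS a b c htri hsub' hE' ℓ hA hB hΔ q hq
      (fun t ht => hqn ▸ Finset.inf'_le (fun t => L (toR t)) ht) hTuniq
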